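/- Let 1 < α < 2, ρ > 0 and R ≥ 0. Then the function θ(λ) = α·λ·(λ² + ρ²)^{−(1−α/2)} is odd and strictly increasing on ℝ, and the phase ψ_R has exactly one stationary point λ₁ on ℝ (i.e. exactly one solution of θ(λ₁) = R), which is nonnegative. Moreover there exist constants c, C > 0 depending only on α and ρ such that c·R ≤ λ₁ ≤ C·R whenever 0 ≤ R ≤ 1 and c·R^{1/(α−1)} ≤ λ₁ ≤ C·R^{1/(α−1)} whenever R ≥ 1; furthermore θ(λ) ≤ α·λ^{α−1} for all λ > 0, and consequently λ₁ ≥ (R/α)^{1/(α−1)} for all R > 0. -/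
import Mathlib

open Real Filter

noncomputable def theta (α ρ lam : ℝ) : ℝ :=
  α * lam * (lam ^ 2 + ρ ^ 2) ^ (-(1 - α / 2))

noncomputable def psi (α ρ R lam : ℝ) : ℝ :=
  (lam ^ 2 + ρ ^ 2) ^ (α / 2) - R * lam

section aux
variable {α ρ : ℝ} (hα1 : 1 < α) (hα2 : α < 2) (hρ : 0 < ρ)

include hρ in
lemma gpos (lam : ℝ) : 0 < lam ^ 2 + ρ ^ 2 := by positivity

lemma theta_eq (lam : ℝ) : theta α ρ lam = α * lam * (lam ^ 2 + ρ ^ 2) ^ (α / 2 - 1) := by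
  rw [theta]; ring_nf

include hρ in
lemma theta_hasDeriv (lam : ℝ) :
    HasDerivAt (theta α ρ)
      (α * ((lam ^ 2 + ρ ^ 2) ^ (α / 2 - 2) * ((α - 1) * lam ^ 2 + ρ ^ 2))) lam := by
  have hg : 0 < lam ^ 2 + ρ ^ 2 := gpos hρ lam
  have h1 : HasDerivAt (fun x : ℝ => x ^ 2 + ρ ^ 2) (2 * lam) lam := by
    simpa using ((hasDerivAt_pow 2 lam).add_const (ρ ^ 2))
  have h2 := h1.rpow_const (p := α / 2 - 1) (Or.inl hg.ne')
  have h3 := ((hasDerivAt_id lam).mul h2).const_mul α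
  have key : α * (1 * (lam ^ 2 + ρ ^ 2) ^ (α / 2 - 1) +
      lam * (2 * lam * (α / 2 - 1) * (lam ^ 2 + ρ ^ 2) ^ (α / 2 - 1 - 1))) =
      α * ((lam ^ 2 + ρ ^ 2) ^ (α / 2 - 2) * ((α - 1) * lam ^ 2 + ρ ^ 2)) := by
    have e1 : (lam ^ 2 + ρ ^ 2) ^ (α / 2 - 1) =
        (lam ^ 2 + ρ ^ 2) ^ (α / 2 - 2) * (lam ^ 2 + ρ ^ 2) := by
      rw [show α / 2 - 1 = (α / 2 - 2) + 1 by ring, Real.rpow_add hg, Real.rpow_one]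
    have e2 : α / 2 - 1 - 1 = α / 2 - 2 := by ring
    rw [e1, e2]; ring
  have : HasDerivAt (fun x => α * (x * (x ^ 2 + ρ ^ 2) ^ (α / 2 - 1)))
      (α * ((lam ^ 2 + ρ ^ 2) ^ (α / 2 - 2) * ((α - 1) * lam ^ 2 + ρ ^ 2))) lam := by
    rw [← key]; exact h3
  have funeq : (fun x => α * (x * (x ^ 2 + ρ ^ 2) ^ (α / 2 - 1))) = theta α ρ := by
    funext x; rw [theta_eq]; ring
  rwa [funeq] at this

include hα1 hρ in
lemma theta_strictMono : StrictMono (theta α ρ) := by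
  refine strictMono_of_hasDerivAt_pos (f' := fun lam =>
    α * ((lam ^ 2 + ρ ^ 2) ^ (α / 2 - 2) * ((α - 1) * lam ^ 2 + ρ ^ 2)))
    (fun lam => theta_hasDeriv hρ lam) (fun lam => ?_)
  have hg : 0 < lam ^ 2 + ρ ^ 2 := gpos hρ lam
  have h1 : (0:ℝ) < (lam ^ 2 + ρ ^ 2) ^ (α / 2 - 2) := Real.rpow_pos_of_pos hg _
  have h2 : (0:ℝ) < (α - 1) * lam ^ 2 + ρ ^ 2 := by nlinarith [sq_nonneg lam, sq_nonneg ρ]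
  have : (0:ℝ) < α := by linarith
  positivity

lemma theta_zero : theta α ρ 0 = 0 := by simp [theta]

include hρ in
lemma theta_cont : Continuous (theta α ρ) := by
  have : Continuous fun lam : ℝ => (lam ^ 2 + ρ ^ 2) ^ (-(1 - α / 2)) := by
    apply Continuous.rpow_const (by continuity)
    exact fun x => Or.inl (gpos hρ x).ne'
  exact (continuous_const.mul continuous_id).mul this

-- sq to rpow helper
lemma sq_rpow {x : ℝ} (hx : 0 ≤ x) (p : ℝ) : ((x ^ 2 : ℝ)) ^ p = x ^ (2 * p) := by
  rw [← Real.rpow_natCast x 2, ← Real.rpow_mul hx]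
  norm_num

include hα1 hα2 hρ in
lemma theta_le_lin {lam : ℝ} (hl : 0 ≤ lam) : theta α ρ lam ≤ α * ρ ^ (α - 2) * lam := by
  rw [theta_eq]
  have hα : (0:ℝ) < α := by linarith
  have h1 : (lam ^ 2 + ρ ^ 2) ^ (α / 2 - 1) ≤ (ρ ^ 2 : ℝ) ^ (α / 2 - 1) :=
    Real.rpow_le_rpow_of_nonpos (by positivity) (by nlinarith) (by linarith)
  have h2 : ((ρ ^ 2 : ℝ)) ^ (α / 2 - 1) = ρ ^ (α - 2) := by
    rw [sq_rpow hρ.le]; ring_nf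
  calc α * lam * (lam ^ 2 + ρ ^ 2) ^ (α / 2 - 1)
      ≤ α * lam * (ρ ^ 2 : ℝ) ^ (α / 2 - 1) := by
        apply mul_le_mul_of_nonneg_left h1 (mul_nonneg hα.le hl)
    _ = α * ρ ^ (α - 2) * lam := by rw [h2]; ring

include hα1 hα2 in
lemma theta_le_pow {lam : ℝ} (hl : 0 < lam) : theta α ρ lam ≤ α * lam ^ (α - 1) := by
  rw [theta_eq]
  have hα : (0:ℝ) < α := by linarith
  have h1 : (lam ^ 2 + ρ ^ 2) ^ (α / 2 - 1) ≤ ((lam ^ 2 : ℝ)) ^ (α / 2 - 1) :=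
    Real.rpow_le_rpow_of_nonpos (by positivity) (by nlinarith) (by linarith)
  have h2 : ((lam ^ 2 : ℝ)) ^ (α / 2 - 1) = lam ^ (α - 2) := by
    rw [sq_rpow hl.le]; ring_nf
  have h3 : lam * lam ^ (α - 2) = lam ^ (α - 1) := by
    rw [show lam * lam ^ (α - 2) = lam ^ (1:ℝ) * lam ^ (α - 2) by rw [Real.rpow_one],
      ← Real.rpow_add hl]
    ring_nf
  calc α * lam * (lam ^ 2 + ρ ^ 2) ^ (α / 2 - 1)
      ≤ α * lam * lam ^ (α - 2) := by
        rw [← h2]; exact mul_le_mul_of_nonneg_left h1 (mul_nonneg hα.le hl.le)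
    _ = α * lam ^ (α - 1) := by rw [mul_assoc, h3]

include hα1 hα2 hρ in
lemma theta_ge_large {lam : ℝ} (hl : ρ ≤ lam) :
    α * 2 ^ (α / 2 - 1) * lam ^ (α - 1) ≤ theta α ρ lam := by
  have hlam : 0 < lam := lt_of_lt_of_le hρ hl
  have hα : (0:ℝ) < α := by linarith
  rw [theta_eq]
  have h1 : ((2 * lam ^ 2 : ℝ)) ^ (α / 2 - 1) ≤ (lam ^ 2 + ρ ^ 2) ^ (α / 2 - 1) :=
    Real.rpow_le_rpow_of_nonpos (by positivity) (by nlinarith) (by linarith)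
  have h2 : ((2 * lam ^ 2 : ℝ)) ^ (α / 2 - 1) = 2 ^ (α / 2 - 1) * lam ^ (α - 2) := by
    rw [Real.mul_rpow (by norm_num) (by positivity), sq_rpow hlam.le]; ring_nf
  have h3 : lam * lam ^ (α - 2) = lam ^ (α - 1) := by
    rw [show lam * lam ^ (α - 2) = lam ^ (1:ℝ) * lam ^ (α - 2) by rw [Real.rpow_one],
      ← Real.rpow_add hlam]
    ring_nf
  calc α * 2 ^ (α / 2 - 1) * lam ^ (α - 1) = α * lam * (2 ^ (α / 2 - 1) * lam ^ (α - 2)) := by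
        rw [← h3]; ring
    _ = α * lam * ((2 * lam ^ 2 : ℝ)) ^ (α / 2 - 1) := by rw [h2]
    _ ≤ α * lam * (lam ^ 2 + ρ ^ 2) ^ (α / 2 - 1) :=
        mul_le_mul_of_nonneg_left h1 (mul_nonneg hα.le hlam.le)

include hα1 hα2 hρ in
lemma theta_ge_small (M : ℝ) {lam : ℝ} (h0 : 0 ≤ lam) (hM : lam ≤ M) :
    α * (M ^ 2 + ρ ^ 2) ^ (α / 2 - 1) * lam ≤ theta α ρ lam := by
  have hα : (0:ℝ) < α := by linarith
  rw [theta_eq]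
  have h1 : (M ^ 2 + ρ ^ 2) ^ (α / 2 - 1) ≤ (lam ^ 2 + ρ ^ 2) ^ (α / 2 - 1) :=
    Real.rpow_le_rpow_of_nonpos (by positivity) (by nlinarith) (by linarith)
  calc α * (M ^ 2 + ρ ^ 2) ^ (α / 2 - 1) * lam
      = α * lam * (M ^ 2 + ρ ^ 2) ^ (α / 2 - 1) := by ring
    _ ≤ α * lam * (lam ^ 2 + ρ ^ 2) ^ (α / 2 - 1) :=
        mul_le_mul_of_nonneg_left h1 (mul_nonneg hα.le h0)

include hα1 hα2 hρ in
lemma theta_tendsto : Tendsto (theta α ρ) atTop atTop := by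
  have hα : (0:ℝ) < α := by linarith
  have h1 : Tendsto (fun lam : ℝ => α * 2 ^ (α / 2 - 1) * lam ^ (α - 1)) atTop atTop := by
    apply Tendsto.const_mul_atTop (by positivity)
    exact tendsto_rpow_atTop (by linarith)
  apply tendsto_atTop_mono' _ _ h1
  filter_upwards [eventually_ge_atTop ρ] with lam hl
  exact theta_ge_large hα1 hα2 hρ hl

include hα1 hα2 hρ in
lemma theta_surj {R : ℝ} (hR : 0 ≤ R) : ∃ lam, 0 ≤ lam ∧ theta α ρ lam = R := by
  obtain ⟨M, hM⟩ := ((theta_tendsto hα1 hα2 hρ).eventually_ge_atTop R).exists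
  rcases le_total M 0 with h | h
  · refine ⟨0, le_refl _, ?_⟩
    have h2 := (theta_strictMono hα1 hρ).monotone h
    rw [theta_zero] at h2
    have h0 : theta α ρ 0 = (0:ℝ) := theta_zero
    rw [h0]
    linarith
  · have h0 : theta α ρ 0 = (0:ℝ) := theta_zero
    have hco : ContinuousOn (theta α ρ) (Set.Icc 0 M) := (theta_cont hρ).continuousOn
    have := intermediate_value_Icc h hco
    rw [h0] at this
    obtain ⟨lam, hlam, heq⟩ := this ⟨hR, hM⟩
    exact ⟨lam, hlam.1, heq⟩

end aux

section main
variable {α ρ : ℝ} (hα1 : 1 < α) (hα2 : α < 2) (hρ : 0 < ρ)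

include hα1 hρ in
lemma theta_nonneg_root {R lam1 : ℝ} (hR : 0 ≤ R) (heq : theta α ρ lam1 = R) : 0 ≤ lam1 := by
  by_contra h
  push_neg at h
  have := (theta_strictMono hα1 hρ) h
  rw [theta_zero, heq] at this
  linarith

include hα1 hα2 hρ in
lemma theta_pos_root {R lam1 : ℝ} (hR : 0 < R) (heq : theta α ρ lam1 = R) : 0 < lam1 := by
  by_contra h
  push_neg at h
  have := (theta_strictMono hα1 hρ).monotone h
  rw [theta_zero, heq] at this
  linarith

include hα1 hα2 hρ in
lemma key6 {R lam1 : ℝ} (hR : 0 < R) (heq : theta α ρ lam1 = R) :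
    (R / α) ^ (1 / (α - 1)) ≤ lam1 := by
  have hα : (0:ℝ) < α := by linarith
  have hne : α - 1 ≠ 0 := by intro h; rw [sub_eq_zero] at h; linarith
  have hβ : (0:ℝ) < 1 / (α - 1) := div_pos one_pos (by linarith)
  have hl0 : 0 < lam1 := theta_pos_root hα1 hα2 hρ hR heq
  have hpow : R ≤ α * lam1 ^ (α - 1) := by rw [← heq]; exact theta_le_pow hα1 hα2 hl0
  have h1 : R / α ≤ lam1 ^ (α - 1) := (div_le_iff₀ hα).mpr (by linarith [hpow, mul_comm α (lam1 ^ (α-1))])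
  have h2 := Real.rpow_le_rpow (by positivity) h1 hβ.le
  rwa [← Real.rpow_mul hl0.le, mul_one_div_cancel hne, Real.rpow_one] at h2

end main

theorem stmt0 (α ρ : ℝ) (hα1 : 1 < α) (hα2 : α < 2) (hρ : 0 < ρ) :
    (∀ lam : ℝ, theta α ρ (-lam) = - theta α ρ lam) ∧
    StrictMono (theta α ρ) ∧
    (∀ R : ℝ, 0 ≤ R → (∃! lam1 : ℝ, theta α ρ lam1 = R) ∧
      ∀ lam1 : ℝ, theta α ρ lam1 = R → 0 ≤ lam1) ∧
    (∃ c C : ℝ, 0 < c ∧ 0 < C ∧ ∀ R lam1 : ℝ, theta α ρ lam1 = R →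
      ((0 ≤ R → R ≤ 1 → c * R ≤ lam1 ∧ lam1 ≤ C * R) ∧
       (1 ≤ R → c * R ^ (1 / (α - 1)) ≤ lam1 ∧ lam1 ≤ C * R ^ (1 / (α - 1))))) ∧
    (∀ lam : ℝ, 0 < lam → theta α ρ lam ≤ α * lam ^ (α - 1)) ∧
    (∀ R lam1 : ℝ, 0 < R → theta α ρ lam1 = R → (R / α) ^ (1 / (α - 1)) ≤ lam1) := by
  have hα : (0:ℝ) < α := by linarith
  have hne : α - 1 ≠ 0 := by intro h; rw [sub_eq_zero] at h; linarith
  have hβ : (0:ℝ) < 1 / (α - 1) := div_pos one_pos (by linarith)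
  refine ⟨?_, theta_strictMono hα1 hρ, ?_, ?_, fun lam hl => theta_le_pow hα1 hα2 hl,
    fun R lam1 hR heq => key6 hα1 hα2 hρ hR heq⟩
  · intro lam
    unfold theta
    rw [neg_sq]
    ring
  · intro R hR
    obtain ⟨lam, _, heq⟩ := theta_surj hα1 hα2 hρ hR
    refine ⟨⟨lam, heq, fun y hy => (theta_strictMono hα1 hρ).injective (hy.trans heq.symm)⟩, ?_⟩
    exact fun lam1 h => theta_nonneg_root hα1 hρ hR h
  · obtain ⟨M, hM1⟩ := ((theta_tendsto hα1 hα2 hρ).eventually_ge_atTop 1).exists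
    have hM0 : 0 < M := by
      by_contra h
      push_neg at h
      have := (theta_strictMono hα1 hρ).monotone h
      rw [theta_zero] at this
      linarith
    set K0 : ℝ := α * ρ ^ (α - 2) with hK0
    set K1 : ℝ := α * (M ^ 2 + ρ ^ 2) ^ (α / 2 - 1) with hK1
    set K2 : ℝ := α * 2 ^ (α / 2 - 1) with hK2
    have hK0p : 0 < K0 := by positivity
    have hK1p : 0 < K1 := by positivity
    have hK2p : 0 < K2 := by positivity
    set c1 : ℝ := K0⁻¹
    set c2 : ℝ := (α⁻¹) ^ (1 / (α - 1))
    set C1 : ℝ := K1⁻¹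
    set C2 : ℝ := (K2⁻¹) ^ (1 / (α - 1))
    have hc1 : 0 < c1 := by positivity
    have hc2 : 0 < c2 := Real.rpow_pos_of_pos (by positivity) _
    have hC1 : 0 < C1 := by positivity
    have hC2 : 0 < C2 := Real.rpow_pos_of_pos (by positivity) _
    refine ⟨min c1 c2, max C1 (max C2 ρ), lt_min hc1 hc2, lt_max_of_lt_left hC1, ?_⟩
    intro R lam1 heq
    constructor
    · intro hR0 hR1
      have hl0 : 0 ≤ lam1 := theta_nonneg_root hα1 hρ hR0 heq
      have hlM : lam1 ≤ M := by
        have h := (theta_strictMono hα1 hρ).le_iff_le.mp (show theta α ρ lam1 ≤ theta α ρ M by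
          rw [heq]; linarith)
        exact h
      constructor
      · have hub : R ≤ K0 * lam1 := by
          rw [← heq]
          have := theta_le_lin hα1 hα2 hρ hl0
          calc theta α ρ lam1 ≤ α * ρ ^ (α - 2) * lam1 := this
            _ = K0 * lam1 := by rw [hK0]
        calc min c1 c2 * R ≤ c1 * R := mul_le_mul_of_nonneg_right (min_le_left _ _) hR0
          _ ≤ lam1 := by
              rw [show c1 * R = K0⁻¹ * R from rfl, inv_mul_le_iff₀ hK0p]
              linarith [hub, mul_comm K0 lam1]
      · have hlb : K1 * lam1 ≤ R := by
          rw [← heq]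
          have := theta_ge_small hα1 hα2 hρ M hl0 hlM
          calc K1 * lam1 = α * (M ^ 2 + ρ ^ 2) ^ (α / 2 - 1) * lam1 := by rw [hK1]
            _ ≤ theta α ρ lam1 := this
        calc lam1 ≤ C1 * R := by
              rw [show C1 * R = K1⁻¹ * R from rfl, le_inv_mul_iff₀ hK1p]
              linarith
          _ ≤ max C1 (max C2 ρ) * R := mul_le_mul_of_nonneg_right (le_max_left _ _) hR0
    · intro hR1
      have hR0 : 0 < R := by linarith
      have hl0 : 0 < lam1 := theta_pos_root hα1 hα2 hρ hR0 heq
      have hRb : (0:ℝ) ≤ R ^ (1 / (α - 1)) := Real.rpow_nonneg (by linarith) _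
      have hRb1 : (1:ℝ) ≤ R ^ (1 / (α - 1)) := by
        calc (1:ℝ) = 1 ^ (1 / (α - 1)) := (Real.one_rpow _).symm
          _ ≤ R ^ (1 / (α - 1)) := Real.rpow_le_rpow zero_le_one hR1 hβ.le
      constructor
      · have hkey := key6 hα1 hα2 hρ hR0 heq
        have : c2 * R ^ (1 / (α - 1)) = (R / α) ^ (1 / (α - 1)) := by
          rw [show R / α = α⁻¹ * R by field_simp [mul_comm],
            Real.mul_rpow (by positivity) (by linarith)]
        calc min c1 c2 * R ^ (1 / (α - 1)) ≤ c2 * R ^ (1 / (α - 1)) :=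
              mul_le_mul_of_nonneg_right (min_le_right _ _) hRb
          _ = (R / α) ^ (1 / (α - 1)) := this
          _ ≤ lam1 := hkey
      · rcases le_total ρ lam1 with hcase | hcase
        · have hlb : K2 * lam1 ^ (α - 1) ≤ R := by
            rw [← heq]
            have := theta_ge_large hα1 hα2 hρ hcase
            calc K2 * lam1 ^ (α - 1) = α * 2 ^ (α / 2 - 1) * lam1 ^ (α - 1) := by rw [hK2]
              _ ≤ theta α ρ lam1 := this
          have h1 : lam1 ^ (α - 1) ≤ K2⁻¹ * R := by
            rw [le_inv_mul_iff₀ hK2p]; linarith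
          have h2 := Real.rpow_le_rpow (Real.rpow_nonneg hl0.le _) h1 hβ.le
          rw [← Real.rpow_mul hl0.le, mul_one_div_cancel hne, Real.rpow_one,
            Real.mul_rpow (by positivity) (by linarith)] at h2
          calc lam1 ≤ C2 * R ^ (1 / (α - 1)) := h2
            _ ≤ max C1 (max C2 ρ) * R ^ (1 / (α - 1)) :=
                mul_le_mul_of_nonneg_right (le_trans (le_max_left _ _) (le_max_right _ _)) hRb
        · calc lam1 ≤ ρ := hcase
            _ = ρ * 1 := (mul_one ρ).symm
            _ ≤ ρ * R ^ (1 / (α - 1)) := mul_le_mul_of_nonneg_left hRb1 hρ.le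
            _ ≤ max C1 (max C2 ρ) * R ^ (1 / (α - 1)) :=
                mul_le_mul_of_nonneg_right (le_trans (le_max_right _ _) (le_max_right _ _)) hRb
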